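/- For any positive integers k and m, every k-uniform hypergraph on n ≥ m vertices with fewer than C(n,k)/C(m,k) edges contains an independent set of size m (a set of m vertices containing no edge). -/

import Mathlib

lemma card_supersets {V : Type*} [Fintype V] [DecidableEq V] (e : Finset V) (m : ℕ)
    (hk : e.card ≤ m) :
    (((Finset.univ : Finset V).powersetCard m).filter (fun I => e ⊆ I)).card
      = (Fintype.card V - e.card).choose (m - e.card) := by
  rw [← Finset.card_compl e, ← Finset.card_powersetCard]
  apply Finset.card_bij (fun I _ => I \ e)
  · intro I hI
    simp only [Finset.mem_filter, Finset.mem_powersetCard] at hI ⊢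
    obtain ⟨⟨_, hIm⟩, heI⟩ := hI
    constructor
    · intro x hx
      simp only [Finset.mem_sdiff] at hx
      simp [hx.2]
    · rw [Finset.card_sdiff_of_subset heI, hIm]
  · intro I hI J hJ h
    simp only [Finset.mem_filter, Finset.mem_powersetCard] at hI hJ
    have : I \ e ∪ e = J \ e ∪ e := by rw [h]
    rwa [Finset.sdiff_union_of_subset hI.2, Finset.sdiff_union_of_subset hJ.2] at this
  · intro J hJ
    simp only [Finset.mem_powersetCard] at hJ
    refine ⟨J ∪ e, ?_, ?_⟩
    · simp only [Finset.mem_filter, Finset.mem_powersetCard]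
      have hdisj : Disjoint J e := by
        rw [Finset.disjoint_left]
        intro a haJ hae
        have := hJ.1 haJ
        simp [hae] at this
      refine ⟨⟨Finset.subset_univ _, ?_⟩, Finset.subset_union_right⟩
      rw [Finset.card_union_of_disjoint hdisj, hJ.2]
      omega
    · have hdisj : Disjoint J e := by
        rw [Finset.disjoint_left]
        intro a haJ hae
        have := hJ.1 haJ
        simp [hae] at this
      rw [Finset.union_sdiff_right, Finset.sdiff_eq_self_of_disjoint hdisj]

/-- Katona–Nemetz–Simonovits: every k-uniform hypergraph on n ≥ m vertices with
fewer than C(n,k)/C(m,k) edges (i.e. |E|·C(m,k) < C(n,k)) contains an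
independent set of size m. -/
theorem turan_hypergraph {V : Type*} [Fintype V] [DecidableEq V]
    (k m : ℕ) (hk : 0 < k) (hm : 0 < m)
    (E : Finset (Finset V)) (hunif : ∀ e ∈ E, e.card = k)
    (hnm : m ≤ Fintype.card V)
    (hcount : E.card * m.choose k < (Fintype.card V).choose k) :
    ∃ I : Finset V, I.card = m ∧ ∀ e ∈ E, ¬ e ⊆ I := by
  set n := Fintype.card V with hn
  by_cases hkm : k ≤ m
  · by_contra h
    push_neg at h
    -- every m-set contains an edge
    set S := (Finset.univ : Finset V).powersetCard m with hS
    have hcover : S ⊆ E.biUnion (fun e => S.filter (fun I => e ⊆ I)) := by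
      intro I hI
      simp only [hS, Finset.mem_powersetCard] at hI
      obtain ⟨e, heE, heI⟩ := h I hI.2
      simp only [Finset.mem_biUnion, Finset.mem_filter]
      exact ⟨e, heE, by simp [hS, Finset.mem_powersetCard, hI.2, heI]⟩
    have h1 : S.card ≤ ∑ e ∈ E, (S.filter (fun I => e ⊆ I)).card :=
      le_trans (Finset.card_le_card hcover) (Finset.card_biUnion_le)
    have h2 : ∀ e ∈ E, (S.filter (fun I => e ⊆ I)).card = (n - k).choose (m - k) := by
      intro e he
      have := card_supersets e m (by rw [hunif e he]; exact hkm)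
      rwa [hunif e he] at this
    rw [Finset.sum_congr rfl h2, Finset.sum_const, smul_eq_mul] at h1
    have hScard : S.card = n.choose m := by
      simp [hS, Finset.card_powersetCard, hn]
    rw [hScard] at h1
    -- multiply by C(m,k)
    have key : n.choose m * m.choose k = n.choose k * (n - k).choose (m - k) :=
      Nat.choose_mul hkm
    have hpos : 0 < (n - k).choose (m - k) :=
      Nat.choose_pos (by omega)
    have : n.choose k * (n - k).choose (m - k) ≤ E.card * (n - k).choose (m - k) * m.choose k := by
      calc n.choose k * (n - k).choose (m - k) = n.choose m * m.choose k := key.symm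
        _ ≤ E.card * (n - k).choose (m - k) * m.choose k :=
          Nat.mul_le_mul_right _ h1
    have hlt : E.card * (n - k).choose (m - k) * m.choose k
        < n.choose k * (n - k).choose (m - k) := by
      calc E.card * (n - k).choose (m - k) * m.choose k
          = E.card * m.choose k * (n - k).choose (m - k) := by ring
        _ < n.choose k * (n - k).choose (m - k) :=
          (Nat.mul_lt_mul_right hpos).mpr hcount
    omega
  · -- k > m : any m-set works since edges have card k > m
    push_neg at hkm
    obtain ⟨I, hIsub, hIcard⟩ := Finset.exists_subset_card_eq (s := (Finset.univ : Finset V)) (n := m)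
      (by simpa using hnm)
    exact ⟨I, hIcard, fun e he hsub => by
      have := Finset.card_le_card hsub
      rw [hunif e he, hIcard] at this
      omega⟩
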